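/- Consider the sample-based MHE optimization problem at time t with horizon M_t = min{t, M + δ_t}. Suppose at time t we have δ_t > 0 (no measurement in K_s occurred in the interval [t−δ_t, t−1]). If (x̂*_{t−δ_t−M_{t−δ_t}|t−δ_t}, ŵ*_{·|t−δ_t}) is a minimizer of the MHE problem at time t−δ_t, and the trajectory obtained by extending the corresponding optimal trajectory with zero disturbances over [t−δ_t, t−1] remains feasible (its states lie in X and its outputs in Y, with 0 ∈ W), then a minimizer of the MHE problem at time t is given by: x̂*_{t−M_t|t} = x̂*_{t−δ_t−M_{t−δ_t}|t−δ_t}, ŵ*_{j|t} = ŵ*_{j|t−δ_t} for j ∈ [t−M_t, t−δ_t−1], and ŵ*_{j|t} = 0 for j ∈ [t−δ_t, t−1]. In particular, the estimate x̂_t = x̂*_{t|t} equals the open-loop prediction obtained by iterating x̂_{s+1} = f(x̂_s, u_s, 0) from x̂_{t−δ_t}. -/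

import Mathlib

open scoped Classical

noncomputable section

/-- Squared weighted norm `‖v‖²_P = vᵀ P v`. -/
def normSq {k : ℕ} (P : Matrix (Fin k) (Fin k) ℝ) (v : Fin k → ℝ) : ℝ :=
  dotProduct v (P.mulVec v)

/-- Euclidean norm of a vector in `ℝ^k`. -/
def enorm {k : ℕ} (v : Fin k → ℝ) : ℝ := Real.sqrt (∑ i, v i ^ 2)

/-- Sampling set `K_i` generated by the sequence `d` (here `i` is zero-based, so
`sampleSet d 0` is `K_1`): its elements are `t_j^i = d_i + d_{i+1} + ⋯ + d_{i+j-1}`. -/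
def sampleSet (d : ℕ → ℕ) (i : ℕ) : Set ℕ :=
  {t | ∃ j : ℕ, t = ∑ l ∈ Finset.range (j + 1), d (i + l)}

/-- Time of the most recent available measurement strictly before time `t`
(`max {0, j ∈ Ks : j < t}`). -/
def lastMeas (Ks : Set ℕ) (t : ℕ) : ℕ := sSup (insert 0 {j | j ∈ Ks ∧ j < t})

/-- `δ_t = t − 1 − max{0, j ∈ Ks : j < t}`: time elapsed since the last measurement. -/
def delta (Ks : Set ℕ) (t : ℕ) : ℕ := t - 1 - lastMeas Ks t

/-- Time-varying horizon length `M_t = min {t, M + δ_t}`. -/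
def horizon (Ks : Set ℕ) (M t : ℕ) : ℕ := min t (M + delta Ks t)

/-- State at time `t0 + k` of the trajectory started at state `z` at time `t0` and driven by
the input `u` and disturbance `ω` through the dynamics `f`. -/
def rollout {n m q : ℕ} (f : (Fin n → ℝ) → (Fin m → ℝ) → (Fin q → ℝ) → (Fin n → ℝ))
    (u : ℕ → Fin m → ℝ) (ω : ℕ → Fin q → ℝ) (t0 : ℕ) (z : Fin n → ℝ) : ℕ → Fin n → ℝ
  | 0 => z
  | k + 1 => f (rollout f u ω t0 z k) (u (t0 + k)) (ω (t0 + k))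

/-- Feasibility of the decision variables `(z, ω)` (initial state `x̂_{t−L|t}` and
disturbance sequence) for the MHE problem at time `t` with window length `L`:
the induced state/disturbance/output sequence lies in `X`/`W`/`Y`. -/
def Feasible {n m q p : ℕ} (f : (Fin n → ℝ) → (Fin m → ℝ) → (Fin q → ℝ) → (Fin n → ℝ))
    (hout : (Fin n → ℝ) → (Fin m → ℝ) → (Fin q → ℝ) → (Fin p → ℝ))
    (X : Set (Fin n → ℝ)) (W : Set (Fin q → ℝ)) (Y : Set (Fin p → ℝ))
    (u : ℕ → Fin m → ℝ) (t L : ℕ) (z : Fin n → ℝ) (ω : ℕ → Fin q → ℝ) : Prop :=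
  (∀ k ≤ L, rollout f u ω (t - L) z k ∈ X) ∧
  (∀ k < L, ω (t - L + k) ∈ W) ∧
  (∀ k < L, hout (rollout f u ω (t - L) z k) (u (t - L + k)) (ω (t - L + k)) ∈ Y)

/-- MHE cost at time `t` with window length `L`, prior estimate `prior = x̂_{t−L}` and
measured outputs `y` (only measurements at times in `Ks` enter the output term). -/
def mheCost {n m q p : ℕ} (f : (Fin n → ℝ) → (Fin m → ℝ) → (Fin q → ℝ) → (Fin n → ℝ))
    (hout : (Fin n → ℝ) → (Fin m → ℝ) → (Fin q → ℝ) → (Fin p → ℝ))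
    (P2 : Matrix (Fin n) (Fin n) ℝ) (Q : Matrix (Fin q) (Fin q) ℝ)
    (R : Matrix (Fin p) (Fin p) ℝ) (η : ℝ) (Ks : Set ℕ)
    (u : ℕ → Fin m → ℝ) (y : ℕ → Fin p → ℝ) (prior : Fin n → ℝ)
    (t L : ℕ) (z : Fin n → ℝ) (ω : ℕ → Fin q → ℝ) : ℝ :=
  2 * η ^ L * normSq P2 (z - prior)
    + ∑ k ∈ Finset.range L, 2 * η ^ (L - k - 1) * normSq Q (ω (t - L + k))
    + ∑ k ∈ Finset.range L, Set.indicator Ks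
        (fun _ => η ^ (L - k - 1) * normSq R
          (hout (rollout f u ω (t - L) z k) (u (t - L + k)) (ω (t - L + k)) - y (t - L + k)))
        (t - L + k)

lemma rollout_congr {n m q : ℕ} (f : (Fin n → ℝ) → (Fin m → ℝ) → (Fin q → ℝ) → (Fin n → ℝ))
    (u : ℕ → Fin m → ℝ) (ω ω' : ℕ → Fin q → ℝ) (t0 : ℕ) (z : Fin n → ℝ) :
    ∀ k : ℕ, (∀ j < k, ω (t0 + j) = ω' (t0 + j)) →
      rollout f u ω t0 z k = rollout f u ω' t0 z k
  | 0, _ => rfl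
  | k + 1, h => by
    show f _ _ _ = f _ _ _
    rw [rollout_congr f u ω ω' t0 z k (fun j hj => h j (by omega)), h k (by omega)]

lemma rollout_add {n m q : ℕ} (f : (Fin n → ℝ) → (Fin m → ℝ) → (Fin q → ℝ) → (Fin n → ℝ))
    (u : ℕ → Fin m → ℝ) (ω : ℕ → Fin q → ℝ) (t0 a : ℕ) (z : Fin n → ℝ) :
    ∀ b : ℕ, rollout f u ω t0 z (a + b) = rollout f u ω (t0 + a) (rollout f u ω t0 z a) b
  | 0 => rfl
  | b + 1 => by
    have h : a + (b + 1) = (a + b) + 1 := rfl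
    rw [h]
    show f _ _ _ = f _ _ _
    rw [rollout_add f u ω t0 a z b, Nat.add_assoc]

lemma mheCost_congr_omega {n m q p : ℕ}
    (f : (Fin n → ℝ) → (Fin m → ℝ) → (Fin q → ℝ) → (Fin n → ℝ))
    (hout : (Fin n → ℝ) → (Fin m → ℝ) → (Fin q → ℝ) → (Fin p → ℝ))
    (P2 : Matrix (Fin n) (Fin n) ℝ) (Q : Matrix (Fin q) (Fin q) ℝ)
    (R : Matrix (Fin p) (Fin p) ℝ) (η : ℝ) (Ks : Set ℕ)
    (u : ℕ → Fin m → ℝ) (y : ℕ → Fin p → ℝ) (prior : Fin n → ℝ)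
    (t L : ℕ) (z : Fin n → ℝ) (ω ω' : ℕ → Fin q → ℝ)
    (h : ∀ k < L, ω (t - L + k) = ω' (t - L + k)) :
    mheCost f hout P2 Q R η Ks u y prior t L z ω
      = mheCost f hout P2 Q R η Ks u y prior t L z ω' := by
  have hroll : ∀ k, k ≤ L → rollout f u ω (t - L) z k = rollout f u ω' (t - L) z k :=
    fun k hk => rollout_congr f u ω ω' (t - L) z k (fun j hj => h j (by omega))
  unfold mheCost
  congr 1
  · congr 1
    exact Finset.sum_congr rfl fun k hk => by rw [h k (Finset.mem_range.mp hk)]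
  · exact Finset.sum_congr rfl fun k hk => by
      rw [h k (Finset.mem_range.mp hk), hroll k (Finset.mem_range.mp hk).le]

lemma Feasible_restrict {n m q p : ℕ}
    (f : (Fin n → ℝ) → (Fin m → ℝ) → (Fin q → ℝ) → (Fin n → ℝ))
    (hout : (Fin n → ℝ) → (Fin m → ℝ) → (Fin q → ℝ) → (Fin p → ℝ))
    (X : Set (Fin n → ℝ)) (W : Set (Fin q → ℝ)) (Y : Set (Fin p → ℝ))
    (u : ℕ → Fin m → ℝ) (t Mt s δ Ms : ℕ)
    (ht : t = s + δ) (hMt : Mt = Ms + δ) (hMs : Ms ≤ s)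
    (z : Fin n → ℝ) (ω : ℕ → Fin q → ℝ)
    (hf : Feasible f hout X W Y u t Mt z ω) : Feasible f hout X W Y u s Ms z ω := by
  subst ht hMt
  have hb : s + δ - (Ms + δ) = s - Ms := by omega
  obtain ⟨h1, h2, h3⟩ := hf
  rw [hb] at h1 h2 h3
  exact ⟨fun k hk => h1 k (by omega), fun k hk => h2 k (by omega), fun k hk => h3 k (by omega)⟩

lemma mheCost_split {n m q p : ℕ}
    (f : (Fin n → ℝ) → (Fin m → ℝ) → (Fin q → ℝ) → (Fin n → ℝ))
    (hout : (Fin n → ℝ) → (Fin m → ℝ) → (Fin q → ℝ) → (Fin p → ℝ))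
    (P2 : Matrix (Fin n) (Fin n) ℝ) (Q : Matrix (Fin q) (Fin q) ℝ)
    (R : Matrix (Fin p) (Fin p) ℝ) (η : ℝ) (Ks : Set ℕ)
    (u : ℕ → Fin m → ℝ) (y : ℕ → Fin p → ℝ) (prior : Fin n → ℝ)
    (t Mt s δ Ms : ℕ) (ht : t = s + δ) (hMt : Mt = Ms + δ) (hMs : Ms ≤ s)
    (hKs : ∀ k < δ, s + k ∉ Ks) (z : Fin n → ℝ) (ω : ℕ → Fin q → ℝ) :
    mheCost f hout P2 Q R η Ks u y prior t Mt z ω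
      = η ^ δ * mheCost f hout P2 Q R η Ks u y prior s Ms z ω
        + ∑ k ∈ Finset.range δ, 2 * η ^ (δ - k - 1) * normSq Q (ω (s + k)) := by
  subst ht hMt
  have hb : s + δ - (Ms + δ) = s - Ms := by omega
  unfold mheCost
  rw [hb]
  simp only [Finset.sum_range_add]
  have e1 : ∑ k ∈ Finset.range Ms, 2 * η ^ (Ms + δ - k - 1) * normSq Q (ω (s - Ms + k))
      = η ^ δ * ∑ k ∈ Finset.range Ms, 2 * η ^ (Ms - k - 1) * normSq Q (ω (s - Ms + k)) := by
    rw [Finset.mul_sum]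
    refine Finset.sum_congr rfl fun k hk => ?_
    have hk' := Finset.mem_range.mp hk
    have hpow : Ms + δ - k - 1 = δ + (Ms - k - 1) := by omega
    rw [hpow, pow_add]; ring
  have e2 : ∑ k ∈ Finset.range δ, 2 * η ^ (Ms + δ - (Ms + k) - 1) * normSq Q (ω (s - Ms + (Ms + k)))
      = ∑ k ∈ Finset.range δ, 2 * η ^ (δ - k - 1) * normSq Q (ω (s + k)) := by
    refine Finset.sum_congr rfl fun k hk => ?_
    have hpow : Ms + δ - (Ms + k) - 1 = δ - k - 1 := by omega
    have hidx : s - Ms + (Ms + k) = s + k := by omega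
    rw [hpow, hidx]
  have e3 : ∑ k ∈ Finset.range Ms, Set.indicator Ks
        (fun _ => η ^ (Ms + δ - k - 1) * normSq R
          (hout (rollout f u ω (s - Ms) z k) (u (s - Ms + k)) (ω (s - Ms + k)) - y (s - Ms + k)))
        (s - Ms + k)
      = η ^ δ * ∑ k ∈ Finset.range Ms, Set.indicator Ks
        (fun _ => η ^ (Ms - k - 1) * normSq R
          (hout (rollout f u ω (s - Ms) z k) (u (s - Ms + k)) (ω (s - Ms + k)) - y (s - Ms + k)))
        (s - Ms + k) := by
    rw [Finset.mul_sum]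
    refine Finset.sum_congr rfl fun k hk => ?_
    have hk' := Finset.mem_range.mp hk
    have hpow : Ms + δ - k - 1 = δ + (Ms - k - 1) := by omega
    by_cases hmem : (s - Ms + k) ∈ Ks
    · rw [Set.indicator_of_mem hmem, Set.indicator_of_mem hmem, hpow, pow_add]; ring
    · rw [Set.indicator_of_notMem hmem, Set.indicator_of_notMem hmem, mul_zero]
  have e4 : ∑ k ∈ Finset.range δ, Set.indicator Ks
        (fun _ => η ^ (Ms + δ - (Ms + k) - 1) * normSq R
          (hout (rollout f u ω (s - Ms) z (Ms + k)) (u (s - Ms + (Ms + k)))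
            (ω (s - Ms + (Ms + k))) - y (s - Ms + (Ms + k))))
        (s - Ms + (Ms + k)) = 0 := by
    refine Finset.sum_eq_zero fun k hk => ?_
    have hk' := Finset.mem_range.mp hk
    have hidx : s - Ms + (Ms + k) = s + k := by omega
    rw [hidx, Set.indicator_of_notMem (hKs k hk')]
  rw [e1, e2, e3, e4]
  ring

/-- Proposition 1. If no measurement arrived in `[t−δ_t, t−1]` (i.e.
`δ_t > 0`), if `(z⋆, ω⋆)` is a minimizer of the MHE problem at time `s = t − δ_t`, and if
its extension by zero disturbances over `[s, t−1]` remains feasible (with `0 ∈ W`), then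
this extension is a minimizer of the MHE problem at time `t`; in particular the estimate
`x̂_t` equals the open-loop prediction obtained by iterating `x̂ ↦ f(x̂, u, 0)` for `δ_t`
steps from the estimate `x̂_{t−δ_t}` produced at time `s`. -/
theorem mhe_open_loop_prediction
    {n m q p : ℕ}
    (f : (Fin n → ℝ) → (Fin m → ℝ) → (Fin q → ℝ) → (Fin n → ℝ))
    (hout : (Fin n → ℝ) → (Fin m → ℝ) → (Fin q → ℝ) → (Fin p → ℝ))
    (X : Set (Fin n → ℝ)) (W : Set (Fin q → ℝ)) (Y : Set (Fin p → ℝ))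
    (h0W : (0 : Fin q → ℝ) ∈ W)
    (P2 : Matrix (Fin n) (Fin n) ℝ) (Q : Matrix (Fin q) (Fin q) ℝ)
    (R : Matrix (Fin p) (Fin p) ℝ) (η : ℝ)
    (hP2 : P2.PosDef) (hQ : Q.PosSemidef) (hR : R.PosSemidef)
    (hη0 : 0 ≤ η) (hη1 : η < 1)
    (Ks : Set ℕ) (M : ℕ)
    (u : ℕ → Fin m → ℝ) (y : ℕ → Fin p → ℝ)
    -- prior estimates (the estimate produced at each past time, used in the cost)
    (xhat : ℕ → Fin n → ℝ)
    -- current time, with δ_t > 0, and the time s = t − δ_t of the last update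
    (t s : ℕ) (hδ : 0 < delta Ks t) (hst : s = t - delta Ks t)
    -- (z⋆, ω⋆) is a minimizer of the MHE problem at time s
    (zstar : Fin n → ℝ) (ωstar : ℕ → Fin q → ℝ)
    (hfeas_s : Feasible f hout X W Y u s (horizon Ks M s) zstar ωstar)
    (hopt_s : ∀ (z' : Fin n → ℝ) (ω' : ℕ → Fin q → ℝ),
      Feasible f hout X W Y u s (horizon Ks M s) z' ω' →
      mheCost f hout P2 Q R η Ks u y (xhat (s - horizon Ks M s)) s (horizon Ks M s) zstar ωstar
        ≤ mheCost f hout P2 Q R η Ks u y (xhat (s - horizon Ks M s)) s (horizon Ks M s) z' ω')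
    -- the extension of ω⋆ by zero disturbances over [s, t−1]
    (ωext : ℕ → Fin q → ℝ) (hωext : ∀ j, ωext j = if j < s then ωstar j else 0)
    -- the extended trajectory remains feasible for the problem at time t
    (hfeas_t : Feasible f hout X W Y u t (horizon Ks M t) zstar ωext) :
    -- (z⋆, ωext) is a minimizer of the MHE problem at time t …
    (∀ (z' : Fin n → ℝ) (ω' : ℕ → Fin q → ℝ),
      Feasible f hout X W Y u t (horizon Ks M t) z' ω' →
      mheCost f hout P2 Q R η Ks u y (xhat (t - horizon Ks M t)) t (horizon Ks M t) zstar ωext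
        ≤ mheCost f hout P2 Q R η Ks u y (xhat (t - horizon Ks M t)) t (horizon Ks M t) z' ω')
    -- … and the resulting estimate x̂_t is the open-loop prediction from x̂_s
    ∧ rollout f u ωext (t - horizon Ks M t) zstar (horizon Ks M t)
        = rollout f u (fun _ => (0 : Fin q → ℝ)) s
            (rollout f u ωstar (s - horizon Ks M s) zstar (horizon Ks M s)) (delta Ks t) := by
  classical
  -- abbreviations
  have hδeq : delta Ks t = t - 1 - lastMeas Ks t := rfl
  have hbd : BddAbove (insert 0 {j | j ∈ Ks ∧ j < t}) := by
    refine ⟨t, ?_⟩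
    rintro j (rfl | ⟨_, hj⟩)
    · omega
    · exact hj.le
  have hub : ∀ j, j ∈ Ks → j < t → j ≤ lastMeas Ks t := by
    intro j hj hjt
    exact le_csSup hbd (Or.inr ⟨hj, hjt⟩)
  have hLmem : lastMeas Ks t ∈ insert 0 {j | j ∈ Ks ∧ j < t} :=
    Nat.sSup_mem ⟨0, Set.mem_insert _ _⟩ hbd
  have hLt : lastMeas Ks t + 1 < t := by omega
  have hs' : s = lastMeas Ks t + 1 := by omega
  -- lastMeas at time s equals lastMeas at time t
  have hbd' : BddAbove (insert 0 {j | j ∈ Ks ∧ j < s}) := by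
    refine ⟨lastMeas Ks t, ?_⟩
    rintro j (rfl | ⟨hj, hjs⟩)
    · omega
    · omega
  have hL1 : lastMeas Ks s ≤ lastMeas Ks t := by
    refine csSup_le ⟨0, Set.mem_insert _ _⟩ ?_
    rintro j (rfl | ⟨hj, hjs⟩)
    · omega
    · omega
  have hL2 : lastMeas Ks t ≤ lastMeas Ks s := by
    refine le_csSup hbd' ?_
    rcases hLmem with h | ⟨hK, _⟩
    · exact Or.inl h
    · exact Or.inr ⟨hK, by omega⟩
  have hδs : delta Ks s = 0 := by
    unfold delta; omega
  have hMsle : horizon Ks M s ≤ s := min_le_left _ _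
  have hMt : horizon Ks M t = horizon Ks M s + delta Ks t := by
    unfold horizon
    rw [hδs]
    omega
  have ht : t = s + delta Ks t := by omega
  have hbase : t - horizon Ks M t = s - horizon Ks M s := by
    rw [hMt]; omega
  have hnotin : ∀ k < delta Ks t, s + k ∉ Ks := by
    intro k hk hins
    have := hub (s + k) hins (by omega)
    omega
  have hQn : ∀ v, 0 ≤ normSq Q v := fun v => by simpa [normSq] using hQ.dotProduct_mulVec_nonneg v
  rw [← hbase] at hopt_s
  have hsplit : ∀ (z : Fin n → ℝ) (ω : ℕ → Fin q → ℝ),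
      mheCost f hout P2 Q R η Ks u y (xhat (t - horizon Ks M t)) t (horizon Ks M t) z ω
        = η ^ delta Ks t *
            mheCost f hout P2 Q R η Ks u y (xhat (t - horizon Ks M t)) s (horizon Ks M s) z ω
          + ∑ k ∈ Finset.range (delta Ks t), 2 * η ^ (delta Ks t - k - 1) * normSq Q (ω (s + k)) :=
    fun z ω => mheCost_split f hout P2 Q R η Ks u y _ t _ s _ _ ht hMt hMsle hnotin z ω
  have hcand0 : ∑ k ∈ Finset.range (delta Ks t),
      2 * η ^ (delta Ks t - k - 1) * normSq Q (ωext (s + k)) = 0 := by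
    refine Finset.sum_eq_zero fun k hk => ?_
    rw [hωext (s + k), if_neg (by omega)]
    simp [normSq]
  have hcandcost : mheCost f hout P2 Q R η Ks u y (xhat (t - horizon Ks M t)) s
        (horizon Ks M s) zstar ωext
      = mheCost f hout P2 Q R η Ks u y (xhat (t - horizon Ks M t)) s
        (horizon Ks M s) zstar ωstar := by
    refine mheCost_congr_omega f hout P2 Q R η Ks u y _ s _ zstar ωext ωstar fun k hk => ?_
    rw [hωext, if_pos (by omega)]
  constructor
  · intro z' ω' hfeas'
    have hfeas's : Feasible f hout X W Y u s (horizon Ks M s) z' ω' :=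
      Feasible_restrict f hout X W Y u t _ s _ _ ht hMt hMsle z' ω' hfeas'
    have h1 := hopt_s z' ω' hfeas's
    rw [hsplit zstar ωext, hsplit z' ω', hcand0, hcandcost, add_zero]
    refine le_trans (mul_le_mul_of_nonneg_left h1 (pow_nonneg hη0 _)) (le_add_of_nonneg_right ?_)
    refine Finset.sum_nonneg fun k _ => ?_
    exact mul_nonneg (by positivity) (hQn _)
  · rw [hbase, hMt, rollout_add f u ωext (s - horizon Ks M s) (horizon Ks M s) zstar (delta Ks t)]
    have h1 : s - horizon Ks M s + horizon Ks M s = s := by omega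
    rw [h1, rollout_congr f u ωext ωstar (s - horizon Ks M s) zstar (horizon Ks M s)
      (fun j hj => by rw [hωext, if_pos (by omega)])]
    exact rollout_congr f u ωext (fun _ => 0) s _ (delta Ks t)
      (fun j hj => by rw [hωext, if_neg (by omega)])
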